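/- Let g ≥ 2 be an integer and let G be a non-bipartite simple graph on n vertices with minimum degree strictly greater than (2/(2g+1))·n. Then G contains an odd cycle of length less than 2g+1. -/

import Mathlib

open SimpleGraph

section AuxLemmas

variable {V : Type*} [DecidableEq V] {G : SimpleGraph V}

/-- end of a non-nil walk is in the tail of the support. -/
lemma myWalk_end_mem_tail_support {u v : V} (p : G.Walk u v) (h : ¬ p.Nil) :
    v ∈ p.support.tail := by
  cases p with
  | nil => simp at h
  | cons h q => simpa using q.end_mem_support

/-- For a nonnil closed walk, membership in support equals membership in tail of support. -/
lemma myWalk_mem_tail_support_of_mem_support {v x : V} (p : G.Walk v v) (h : ¬ p.Nil)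
    (hx : x ∈ p.support) : x ∈ p.support.tail := by
  rw [p.support_eq_cons, List.mem_cons] at hx
  rcases hx with rfl | hx'
  · exact myWalk_end_mem_tail_support p h
  · exact hx'

lemma myWalk_mem_support_rotate {v x u : V} (p : G.Walk v v) (h : ¬ p.Nil)
    (hu : u ∈ p.support) (hx : x ∈ p.support) : x ∈ (p.rotate u hu).support := by
  have hrot := p.support_rotate u hu
  have : x ∈ (p.rotate u hu).support.tail :=
    hrot.mem_iff.mpr (myWalk_mem_tail_support_of_mem_support p h hx)
  rw [(p.rotate u hu).support_eq_cons]
  exact List.mem_cons_of_mem _ this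

lemma myWalk_length_rotate' {v u : V} (p : G.Walk v v) (hu : u ∈ p.support) :
    (p.rotate u hu).length = p.length := by
  have := congrArg Walk.length (p.take_spec hu)
  rw [Walk.length_append] at this
  unfold Walk.rotate
  rw [Walk.length_append]
  omega

lemma myWalk_one_le_length_of_ne {u v : V} (p : G.Walk u v) (h : u ≠ v) : 1 ≤ p.length := by
  cases p with
  | nil => exact absurd rfl h
  | cons _ q => simp [Walk.length_cons]

/-- If there is no odd closed walk, the graph is 2-colorable. -/
lemma colorable_two_of_no_odd_walk
    (h : ∀ (x : V) (r : G.Walk x x), ¬ Odd r.length) : G.Colorable 2 := by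
  classical
  have parity : ∀ {x y : V} (p q : G.Walk x y), p.length % 2 = q.length % 2 := by
    intro x y p q
    by_contra hne
    refine h x (p.append q.reverse) ?_
    rw [Nat.odd_iff, Walk.length_append, Walk.length_reverse]
    omega
  have hw : ∀ v : V, G.Reachable ((G.connectedComponentMk v).out) v := by
    intro v
    exact (SimpleGraph.ConnectedComponent.eq.mp (Quot.out_eq (G.connectedComponentMk v)) : _)
  have hcol : G.Colorable (Fintype.card Bool) := by
    refine (Coloring.mk (fun v => decide ((hw v).some.length % 2 = 1)) ?_).colorable
    intro a b hab hdec
    have hcomp : (G.connectedComponentMk a).out = (G.connectedComponentMk b).out := by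
      have : G.connectedComponentMk a = G.connectedComponentMk b :=
        SimpleGraph.ConnectedComponent.sound hab.reachable
      rw [this]
    have hdec' : ((hw a).some.length % 2 = 1) ↔ ((hw b).some.length % 2 = 1) := by
      simpa [decide_eq_decide] using hdec
    have hpar := parity (((hw a).some).append (Walk.cons hab Walk.nil))
      ((hw b).some.copy hcomp.symm rfl)
    rw [Walk.length_copy, Walk.length_append, Walk.length_cons, Walk.length_nil] at hpar
    omega
  simpa using hcol

/-- extraction of an odd cycle from an odd closed walk, with length bound. -/
lemma exists_odd_cycle_of_odd_walk :
    ∀ (n : ℕ) (u : V) (p : G.Walk u u), p.length = n → Odd p.length →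
      ∃ (v : V) (c : G.Walk v v), c.IsCycle ∧ Odd c.length ∧ c.length ≤ p.length := by
  classical
  intro n
  induction n using Nat.strong_induction_on with
  | _ n ih =>
  intro u p hpn hodd
  subst hpn
  by_cases hnodup : p.support.tail.Nodup
  · -- p is itself a cycle
    cases p with
    | nil => simp at hodd
    | @cons _ v _ hadj q =>
      rw [Walk.support_cons, List.tail_cons] at hnodup
      have hq : q.IsPath := (Walk.isPath_def q).mpr hnodup
      have hlen : 2 ≤ q.length := by
        have h1 : 1 ≤ q.length := myWalk_one_le_length_of_ne q hadj.symm.ne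
        rw [Nat.odd_iff, Walk.length_cons] at hodd
        omega
      have hedge : s(u, v) ∉ q.edges := by
        intro he
        cases q with
        | nil => simp at he
        | @cons _ w _ hadj2 r =>
          rw [Walk.edges_cons, List.mem_cons] at he
          have hnd := hq.support_nodup
          rw [Walk.support_cons, List.nodup_cons] at hnd
          rcases he with he | he
          · have hwu : w = u := by
              rcases Sym2.eq_iff.mp he with ⟨h1, _⟩ | ⟨h1, _⟩
              · exact absurd h1 hadj.ne
              · exact h1.symm
            subst hwu
            have hrnil : ¬ r.Nil := by
              intro hn
              have h0 : r.length = 0 := by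
                rw [← Walk.nil_iff_length_eq]; exact hn
              rw [Walk.length_cons] at hlen
              omega
            have hmem := myWalk_end_mem_tail_support r hrnil
            have hnd2 := hnd.2
            rw [r.support_eq_cons, List.nodup_cons] at hnd2
            exact hnd2.1 hmem
          · exact hnd.1 (Walk.snd_mem_support_of_mem_edges r he)
      exact ⟨u, Walk.cons hadj q, (Walk.cons_isCycle_iff q hadj).mpr ⟨hq, hedge⟩, hodd, le_rfl⟩
  · -- find a repeated vertex and split
    obtain ⟨x, hx⟩ := List.exists_duplicate_iff_not_nodup.mpr hnodup
    have hxmem : x ∈ p.support := List.mem_of_mem_tail hx.mem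
    have hpnil : ¬ p.Nil := by
      intro hn
      rw [Walk.nil_iff_length_eq] at hn
      simp [hn] at hodd
    set p' := p.rotate x hxmem with hp'
    have hp'len : p'.length = p.length := myWalk_length_rotate' p hxmem
    have hdup' : 2 ≤ p'.support.tail.count x := by
      have h2 := List.duplicate_iff_two_le_count.mp hx
      rw [((p.support_rotate x hxmem).perm).count_eq]
      exact h2
    cases hp'c : p' with
    | nil =>
      rw [hp'c] at hp'len
      simp at hp'len
      rw [Nat.odd_iff, ← hp'len] at hodd
      simp at hodd
    | @cons _ y _ hxy q =>
      rw [hp'c, Walk.support_cons, List.tail_cons] at hdup'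
      have hxq : x ∈ q.support := List.count_pos_iff.mp (by omega)
      set q₁ := q.takeUntil x hxq with hq₁
      set q₂ := q.dropUntil x hxq with hq₂
      have hspec : q₁.append q₂ = q := q.take_spec hxq
      have hlensum : q₁.length + q₂.length = q.length := by
        rw [← Walk.length_append, hspec]
      have hcount1 : q₁.support.count x = 1 := q.count_support_takeUntil_eq_one hxq
      have hq₂len : 1 ≤ q₂.length := by
        by_contra hc
        have h0 : q₂.length = 0 := by omega
        have : q₂ = Walk.nil := Walk.nil_iff_eq_nil.mp (Walk.length_eq_zero_iff.mp h0)
        have hsupp : q.support = q₁.support ++ q₂.support.tail := by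
          rw [← hspec, Walk.support_append]
        rw [this] at hsupp
        simp only [Walk.support_nil, List.tail_cons, List.append_nil] at hsupp
        rw [hsupp, hcount1] at hdup'
        omega
      have hplen : q.length + 1 = p.length := by
        rw [← hp'len, hp'c, Walk.length_cons]
      have hodd' : Odd ((q₁.length + 1) + q₂.length) := by
        rw [show (q₁.length + 1) + q₂.length = p.length by omega]
        exact hodd
      have hc₁ : (Walk.cons hxy q₁ : G.Walk x x).length = q₁.length + 1 := by
        rw [Walk.length_cons]
      have hsplit : Odd (q₁.length + 1) ∨ Odd q₂.length := by
        have hm := Nat.odd_iff.mp hodd'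
        rw [Nat.odd_iff, Nat.odd_iff]
        omega
      rcases hsplit with hcase | hcase
      · obtain ⟨v, c, hc, ho, hle⟩ := ih (q₁.length + 1) (by omega) x (Walk.cons hxy q₁)
          hc₁ (by rw [hc₁]; exact hcase)
        exact ⟨v, c, hc, ho, hle.trans (by rw [hc₁]; omega)⟩
      · obtain ⟨v, c, hc, ho, hle⟩ := ih q₂.length (by omega) x q₂ rfl hcase
        exact ⟨v, c, hc, ho, hle.trans (by omega)⟩

/-- Three distinct neighbours of a vertex on a minimal odd closed walk give a contradiction. -/
lemma three_neighbors_contra {u a b c : V} {m : ℕ}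
    (hmin : ∀ (x : V) (r : G.Walk x x), Odd r.length → m ≤ r.length)
    (hm : 5 ≤ m) (hmodd : m % 2 = 1)
    (hab : a ≠ b) (hac : a ≠ c) (hbc : b ≠ c)
    (hua : G.Adj u a) (hub : G.Adj u b) (huc : G.Adj u c)
    (p : G.Walk a b) (q₁ : G.Walk b c) (q₂ : G.Walk c a)
    (hsum : p.length + q₁.length + q₂.length = m) : False := by
  have key : ∀ {x y : V}, G.Adj u x → G.Adj u y → ∀ (r : G.Walk x y),
      r.length % 2 = 1 → m ≤ r.length + 2 := by
    intro x y hx hy r hr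
    have h := hmin u (Walk.cons hx (r.append (Walk.cons hy.symm Walk.nil))) (by
      rw [Nat.odd_iff, Walk.length_cons, Walk.length_append, Walk.length_cons, Walk.length_nil]
      omega)
    rw [Walk.length_cons, Walk.length_append, Walk.length_cons, Walk.length_nil] at h
    omega
  have h1 := key hua hub p
  have h2 := key hub huc q₁
  have h3 := key huc hua q₂
  have h4 := key hua huc (p.append q₁)
  have h5 := key hub hua (q₁.append q₂)
  have h6 := key huc hub (q₂.append p)
  rw [Walk.length_append] at h4 h5 h6
  have l1 := myWalk_one_le_length_of_ne p hab
  have l2 := myWalk_one_le_length_of_ne q₁ hbc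
  have l3 := myWalk_one_le_length_of_ne q₂ hac.symm
  omega


end AuxLemmas

/-- (Häggkvist) A non-bipartite graph on `n` vertices with minimum degree strictly
greater than `(2/(2g+1)) * n` contains an odd cycle of length less than `2g + 1`. -/
theorem statement2 {V : Type*} [Fintype V] (g : ℕ) (hg : 2 ≤ g)
    (G : SimpleGraph V) [DecidableRel G.Adj]
    (hnb : ¬ G.Colorable 2)
    (hdeg : (2 / (2 * (g : ℝ) + 1)) * (Fintype.card V : ℝ) < (G.minDegree : ℝ)) :
    ∃ (v : V) (w : G.Walk v v), w.IsCycle ∧ Odd w.length ∧ w.length < 2 * g + 1 := by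
  classical
  have hex : ∃ (x : V) (r : G.Walk x x), Odd r.length := by
    by_contra h
    push_neg at h
    exact hnb (colorable_two_of_no_odd_walk h)
  obtain ⟨x0, r0, hr0⟩ := hex
  have hP : ∃ n, ∃ (x : V) (r : G.Walk x x), r.length = n ∧ Odd n :=
    ⟨r0.length, x0, r0, rfl, hr0⟩
  obtain ⟨x1, w1, hwlen, hwodd⟩ := Nat.find_spec hP
  obtain ⟨v, c, hcyc, hcodd, hcle⟩ :=
    exists_odd_cycle_of_odd_walk w1.length x1 w1 rfl (by rw [hwlen]; exact hwodd)
  have hcm : c.length ≤ Nat.find hP := by rw [← hwlen]; exact hcle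
  have hmin : ∀ (x : V) (r : G.Walk x x), Odd r.length → c.length ≤ r.length := by
    intro x r hr
    exact hcm.trans (Nat.find_min' hP ⟨x, r, rfl, hr⟩)
  refine ⟨v, c, hcyc, hcodd, ?_⟩
  by_contra hge
  push_neg at hge
  set M := c.length with hM
  have hM5 : 5 ≤ M := by omega
  have hModd : M % 2 = 1 := Nat.odd_iff.mp hcodd
  have hcnil : ¬ c.Nil := by
    intro hn
    rw [Walk.nil_iff_length_eq] at hn
    omega
  -- every vertex has at most 2 neighbours on the cycle
  have hnbd : ∀ u : V, (c.support.toFinset.filter (fun y => G.Adj u y)).card ≤ 2 := by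
    intro u
    by_contra hcardle
    push_neg at hcardle
    obtain ⟨a, ha, b, hb, d, hd, hab, had, hbd⟩ := Finset.two_lt_card.mp hcardle
    rw [Finset.mem_filter, List.mem_toFinset] at ha hb hd
    obtain ⟨has, hua⟩ := ha
    obtain ⟨hbs, hub⟩ := hb
    obtain ⟨hds, hud⟩ := hd
    have hw' : b ∈ (c.rotate a has).support := myWalk_mem_support_rotate c hcnil has hbs
    have hd' : d ∈ (c.rotate a has).support := myWalk_mem_support_rotate c hcnil has hds
    set w' := c.rotate a has with hw'def
    have hw'len : w'.length = M := myWalk_length_rotate' c has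
    set p := w'.takeUntil b hw' with hp
    set q := w'.dropUntil b hw' with hq
    have hspec : p.append q = w' := w'.take_spec hw'
    have hpq : p.length + q.length = M := by
      rw [← Walk.length_append, hspec, hw'len]
    have hd'' : d ∈ p.support ∨ d ∈ q.support := by
      rw [← hspec] at hd'
      exact (Walk.mem_support_append_iff _ _).mp hd'
    rcases hd'' with hdp | hdq
    · -- d occurs on the a → b arc
      set p₁ := p.takeUntil d hdp with hp₁
      set p₂ := p.dropUntil d hdp with hp₂
      have hspec2 : p₁.append p₂ = p := p.take_spec hdp
      have hsum2 : p₁.length + p₂.length = p.length := by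
        rw [← Walk.length_append, hspec2]
      exact three_neighbors_contra hmin hM5 hModd had hab hbd.symm hua hud hub
        p₁ p₂ q (by omega)
    · -- d occurs on the b → a arc
      set q₁ := q.takeUntil d hdq with hq₁
      set q₂ := q.dropUntil d hdq with hq₂
      have hspec2 : q₁.append q₂ = q := q.take_spec hdq
      have hsum2 : q₁.length + q₂.length = q.length := by
        rw [← Walk.length_append, hspec2]
      exact three_neighbors_contra hmin hM5 hModd hab had hbd hua hub hud
        p q₁ q₂ (by omega)
  -- counting
  set S := c.support.toFinset with hS
  have hScard : S.card = M := by
    have hnd : c.support.tail.Nodup := hcyc.support_nodup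
    have hvmem : v ∈ c.support.tail := myWalk_end_mem_tail_support c hcnil
    have hSeq : S = c.support.tail.toFinset := by
      rw [hS]
      conv_lhs => rw [c.support_eq_cons]
      rw [List.toFinset_cons]
      exact Finset.insert_eq_self.mpr (List.mem_toFinset.mpr hvmem)
    rw [hSeq, List.toFinset_card_of_nodup hnd, List.length_tail, c.length_support]
    omega
  have hcount : M * G.minDegree ≤ 2 * Fintype.card V := by
    calc M * G.minDegree = ∑ _y ∈ S, G.minDegree := by
          rw [Finset.sum_const, hScard, smul_eq_mul]
      _ ≤ ∑ y ∈ S, G.degree y := Finset.sum_le_sum fun y _ => G.minDegree_le_degree y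
      _ = ∑ y ∈ S, ∑ u : V, (if G.Adj y u then 1 else 0) := by
          refine Finset.sum_congr rfl fun y _ => ?_
          rw [← Finset.card_filter, ← neighborFinset_eq_filter]
          rfl
      _ = ∑ u : V, ∑ y ∈ S, (if G.Adj y u then 1 else 0) := Finset.sum_comm
      _ = ∑ u : V, (S.filter (fun y => G.Adj u y)).card := by
          refine Finset.sum_congr rfl fun u _ => ?_
          rw [Finset.card_filter]
          refine Finset.sum_congr rfl fun y _ => ?_
          exact if_congr (G.adj_comm y u) rfl rfl
      _ ≤ ∑ _u : V, 2 := Finset.sum_le_sum fun u _ => hnbd u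
      _ = 2 * Fintype.card V := by rw [Finset.sum_const, smul_eq_mul, mul_comm, Finset.card_univ]
  -- real arithmetic
  have hne : Nonempty V := by
    by_contra hempty
    rw [not_nonempty_iff] at hempty
    exact hnb ⟨Coloring.mk (fun a => isEmptyElim a) (fun {a} _ => isEmptyElim a)⟩
  have hnpos : 0 < Fintype.card V := Fintype.card_pos
  have hcast : (M : ℝ) * (G.minDegree : ℝ) ≤ 2 * (Fintype.card V : ℝ) := by
    exact_mod_cast hcount
  have hge' : (2 * (g : ℝ) + 1) ≤ (M : ℝ) := by
    have : 2 * g + 1 ≤ M := hge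
    exact_mod_cast this
  have h2g1 : (0 : ℝ) < 2 * (g : ℝ) + 1 := by positivity
  have hδ : (0 : ℝ) ≤ (G.minDegree : ℝ) := Nat.cast_nonneg _
  have hkey := mul_lt_mul_of_pos_left hdeg h2g1
  have heq : (2 * (g : ℝ) + 1) * ((2 / (2 * (g : ℝ) + 1)) * (Fintype.card V : ℝ))
      = 2 * (Fintype.card V : ℝ) := by
    field_simp
  rw [heq] at hkey
  have hfin : (2 * (g : ℝ) + 1) * (G.minDegree : ℝ) ≤ (M : ℝ) * (G.minDegree : ℝ) :=
    mul_le_mul_of_nonneg_right hge' hδ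
  linarith
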